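/- Let 𝔤 be a finite-dimensional real Lie algebra, let V₁ and V₂ be linear subspaces of 𝔤 with 𝔤 = V₁ ⊕ V₂ (internal direct sum), such that ⁅V₁,V₁⁆ = V₂, ⁅𝔤,V₂⁆ = 0, V₂ equals the center of 𝔤, and dim V₂ = 1. Let ⟨·,·⟩ be an inner product defined on V₁. Then dim V₁ = 2n for some integer n ≥ 1, and there exist Z ∈ V₂, vectors X₁,…,Xₙ,Y₁,…,Yₙ ∈ V₁, and positive real numbers a₁,…,aₙ, such that (X₁,…,Xₙ,Y₁,…,Yₙ,Z) is a basis of 𝔤, the only non-trivial bracket relations among the basis vectors are ⁅X_i,Y_i⁆ = Z for 1 ≤ i ≤ n (i.e., ⁅X_i,Y_j⁆ = 0 for i ≠ j, ⁅X_i,X_j⁆ = 0 and ⁅Y_i,Y_j⁆ = 0 for all i,j), and the family (a₁X₁,…,aₙXₙ,a₁Y₁,…,aₙYₙ) is orthonormal for ⟨·,·⟩. -/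

import Mathlib

open Module RealInnerProductSpace

universe u

lemma real_inner_self_pos' {E : Type u} [NormedAddCommGroup E] [InnerProductSpace ℝ E]
    {x : E} (hx : x ≠ 0) : 0 < (inner ℝ x x : ℝ) := by
  rw [real_inner_self_eq_norm_mul_norm]
  exact mul_pos (norm_pos_iff.mpr hx) (norm_pos_iff.mpr hx)

lemma symplectic_gram : ∀ (N : ℕ) {E : Type u} [NormedAddCommGroup E] [InnerProductSpace ℝ E]
    [FiniteDimensional ℝ E] (_ : finrank ℝ E = N) (ω : E →ₗ[ℝ] E →ₗ[ℝ] ℝ)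
    (_ : ∀ u, ω u u = 0) (_ : ∀ u : E, u ≠ 0 → ∃ v, ω u v ≠ 0),
    ∃ n : ℕ, N = 2 * n ∧ ∃ X Y : Fin n → E, ∃ a : Fin n → ℝ,
      (∀ i, 0 < a i) ∧
      (∀ i j, ω (X i) (Y j) = if i = j then 1 else 0) ∧
      (∀ i j, ω (X i) (X j) = 0) ∧
      (∀ i j, ω (Y i) (Y j) = 0) ∧
      (∀ i j, (inner ℝ (a i • X i) (a j • X j) : ℝ) = if i = j then 1 else 0) ∧
      (∀ i j, (inner ℝ (a i • Y i) (a j • Y j) : ℝ) = if i = j then 1 else 0) ∧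
      (∀ i j, (inner ℝ (a i • X i) (a j • Y j) : ℝ) = 0) ∧
      Submodule.span ℝ (Set.range X ∪ Set.range Y) = ⊤ := by
  intro N
  induction N using Nat.strong_induction_on with
  | _ N IH =>
  intro E _ _ _ hdim ω halt hnd
  rcases Nat.eq_zero_or_pos N with hN | hN
  · subst hN
    haveI : Subsingleton E := by
      rw [← Module.finrank_zero_iff (R := ℝ)]; exact hdim
    refine ⟨0, rfl, (fun i => i.elim0), (fun i => i.elim0), (fun i => i.elim0),
      fun i => i.elim0, fun i => i.elim0, fun i => i.elim0, fun i => i.elim0,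
      fun i => i.elim0, fun i => i.elim0, fun i => i.elim0, Subsingleton.elim _ _⟩
  · -- N > 0
    haveI : Nontrivial E := Module.nontrivial_of_finrank_pos (R := ℝ) (hdim ▸ hN)
    have hskew : ∀ u v, ω u v = -ω v u := by
      intro u v
      have h := halt (u + v)
      simp only [map_add, LinearMap.add_apply, halt] at h
      linarith
    -- the operator j with ⟪j u, v⟫ = ω u v
    set j : E → E := fun u => (InnerProductSpace.toDual ℝ E).symm
      (LinearMap.toContinuousLinearMap (ω u)) with hjdef
    have hj : ∀ u v, (inner ℝ (j u) v : ℝ) = ω u v := by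
      intro u v
      simp [hjdef, InnerProductSpace.toDual_symm_apply]
    have hjne : ∀ u : E, u ≠ 0 → j u ≠ 0 := by
      intro u hu h0
      obtain ⟨v, hv⟩ := hnd u hu
      apply hv; rw [← hj, h0, inner_zero_left]
    have hjadd : ∀ u v, j (u + v) = j u + j v := by
      intro u v
      apply ext_inner_right ℝ
      intro w
      simp [hj, inner_add_left]
    have hjsmul : ∀ (c : ℝ) (u : E), j (c • u) = c • j u := by
      intro c u
      apply ext_inner_right ℝ
      intro w
      simp [hj, real_inner_smul_left]
    set T : E →ₗ[ℝ] E :=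
      { toFun := fun u => -(j (j u))
        map_add' := fun u v => by show -(j (j (u+v))) = -(j (j u)) + -(j (j v)); rw [hjadd, hjadd]; abel
        map_smul' := fun c u => by show -(j (j (c • u))) = c • -(j (j u)); rw [hjsmul, hjsmul, smul_neg] } with hTdef
    have hT_apply : ∀ u, T u = -(j (j u)) := fun u => rfl
    have hTinner : ∀ u v, (inner ℝ (T u) v : ℝ) = inner ℝ (j u) (j v) := by
      intro u v
      rw [hT_apply, inner_neg_left, hj, hskew, ← hj, real_inner_comm]
      ring_nf
    have hT : T.IsSymmetric := by
      intro u v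
      rw [hTinner, real_inner_comm, ← hTinner, real_inner_comm]
    -- eigenvector of T
    obtain ⟨e, μ, he1, heig⟩ : ∃ (e : E) (μ : ℝ), ‖e‖ = 1 ∧ T e = μ • e := by
      refine ⟨hT.eigenvectorBasis hdim ⟨0, hN⟩, hT.eigenvalues hdim ⟨0, hN⟩,
        (hT.eigenvectorBasis hdim).orthonormal.1 _, ?_⟩
      simpa using hT.apply_eigenvectorBasis hdim ⟨0, hN⟩
    have hne : e ≠ 0 := by intro h; rw [h, norm_zero] at he1; norm_num at he1
    set f := j e with hfdef
    have hf0 : f ≠ 0 := hjne e hne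
    have hee : (inner ℝ e e : ℝ) = 1 := by
      rw [real_inner_self_eq_norm_mul_norm, he1]; norm_num
    have hef : (inner ℝ e f : ℝ) = 0 := by
      rw [real_inner_comm, hfdef, hj, halt]
    have hμf : (inner ℝ f f : ℝ) = μ := by
      have h1 : (inner ℝ (T e) e : ℝ) = μ := by
        rw [heig, real_inner_smul_left, hee]; ring
      rw [← h1, hTinner]
    have hμpos : 0 < μ := by
      rw [← hμf]; exact real_inner_self_pos' hf0
    have hωef : ω e f = μ := by rw [← hj, ← hfdef, hμf]
    have hωfe : ω f e = -μ := by rw [hskew, hωef]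
    have hjf : j f = -(μ • e) := by
      have h2 := heig
      rw [hT_apply] at h2
      rw [hfdef]
      exact neg_eq_iff_eq_neg.mp h2
    have hli2 : LinearIndependent ℝ ![e, f] := by
      rw [linearIndependent_fin2]
      refine ⟨by simpa using hf0, fun c hc => ?_⟩
      simp only [Matrix.cons_val_one, Matrix.head_cons, Matrix.cons_val_zero] at hc
      have h3 : (inner ℝ (c • f) e : ℝ) = 1 := by rw [hc, hee]
      rw [real_inner_smul_left, real_inner_comm, hef] at h3
      norm_num at h3
    set W := Submodule.span ℝ (Set.range ![e, f]) with hWdef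
    have heW : e ∈ W := Submodule.subset_span ⟨0, rfl⟩
    have hfW : f ∈ W := Submodule.subset_span ⟨1, rfl⟩
    have hW2 : finrank ℝ W = 2 := by
      rw [hWdef, finrank_span_eq_card hli2]; simp
    set U := Wᗮ with hUdef
    have hdimU : 2 + finrank ℝ U = N := by
      rw [← hW2, ← hdim, hUdef]
      exact Submodule.finrank_add_finrank_orthogonal W
    have hUe : ∀ u : E, u ∈ U → (inner ℝ e u : ℝ) = 0 := fun u hu =>
      (Submodule.mem_orthogonal W u).mp hu e heW
    have hUf : ∀ u : E, u ∈ U → (inner ℝ f u : ℝ) = 0 := fun u hu =>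
      (Submodule.mem_orthogonal W u).mp hu f hfW
    have hUe' : ∀ u : E, u ∈ U → (inner ℝ u e : ℝ) = 0 := by
      intro u hu; rw [real_inner_comm]; exact hUe u hu
    have hUf' : ∀ u : E, u ∈ U → (inner ℝ u f : ℝ) = 0 := by
      intro u hu; rw [real_inner_comm]; exact hUf u hu
    have hωeU : ∀ u : E, u ∈ U → ω e u = 0 := by
      intro u hu; rw [← hj, ← hfdef]; exact hUf u hu
    have hωfU : ∀ u : E, u ∈ U → ω f u = 0 := by
      intro u hu
      rw [← hj, hjf, inner_neg_left, real_inner_smul_left, hUe u hu]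
      ring
    have hjU : ∀ u : E, u ∈ U → j u ∈ U := by
      intro u hu
      rw [hUdef, Submodule.mem_orthogonal]
      intro w hw
      induction hw using Submodule.span_induction with
      | mem w hw =>
        obtain ⟨i, rfl⟩ := hw
        fin_cases i
        · show (inner ℝ e (j u) : ℝ) = 0
          rw [real_inner_comm, hj, hskew, hωeU u hu]; ring
        · show (inner ℝ f (j u) : ℝ) = 0
          rw [real_inner_comm, hj, hskew, hωfU u hu]; ring
      | zero => exact inner_zero_left _
      | add x y hx hy hx' hy' => rw [inner_add_left, hx', hy']; ring
      | smul c x hx hx' => rw [real_inner_smul_left, hx']; ring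
    have hdimU_lt : finrank ℝ U < N := by omega
    set ω' : U →ₗ[ℝ] U →ₗ[ℝ] ℝ := ω.compl₁₂ U.subtype U.subtype with hω'def
    have hω'apply : ∀ u v : U, ω' u v = ω (u : E) (v : E) := fun u v => rfl
    have hcoe0 : ∀ u : U, u ≠ 0 → (u : E) ≠ 0 := by
      intro u hu h; exact hu (Subtype.ext h)
    obtain ⟨n', hn', X', Y', a', ha'pos, hXY', hXX', hYY', hiXX', hiYY', hiXY', hspan'⟩ :=
      IH (finrank ℝ U) hdimU_lt rfl ω' (fun u => halt (u : E))
        (by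
          intro u hu
          refine ⟨⟨j (u : E), hjU _ u.2⟩, ?_⟩
          rw [hω'apply]
          show ω (u : E) (j (u : E)) ≠ 0
          rw [← hj]
          exact (real_inner_self_pos' (hjne _ (hcoe0 u hu))).ne')
    -- scalars
    set s := Real.sqrt μ with hsdef
    have hspos : 0 < s := Real.sqrt_pos.mpr hμpos
    have hs : s * s = μ := Real.mul_self_sqrt hμpos.le
    set r := Real.sqrt s with hrdef
    have hrpos : 0 < r := Real.sqrt_pos.mpr hspos
    have hr : r * r = s := Real.mul_self_sqrt hspos.le
    -- new vectors
    set X0 : E := r⁻¹ • e with hX0def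
    set Y0 : E := (s * r)⁻¹ • f with hY0def
    refine ⟨n' + 1, by omega, Fin.cons X0 (fun i => (X' i : E)),
      Fin.cons Y0 (fun i => (Y' i : E)), Fin.cons r a', ?_, ?_, ?_, ?_, ?_, ?_, ?_, ?_⟩
    · intro i
      induction i using Fin.cases with
      | zero => simpa using hrpos
      | succ i => simpa using ha'pos i
    · -- ω X Y
      intro i j
      induction i using Fin.cases with
      | zero =>
        induction j using Fin.cases with
        | zero =>
          simp only [Fin.cons_zero, hX0def, hY0def, map_smul, LinearMap.smul_apply,
            smul_eq_mul, hωef, if_pos rfl, ↓reduceIte]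
          rw [← hs, ← hr]
          field_simp
        | succ j =>
          simp only [Fin.cons_zero, Fin.cons_succ, hX0def, map_smul, LinearMap.smul_apply,
            smul_eq_mul, hωeU _ (Y' j).2]
          simp [(Fin.succ_ne_zero j).symm]
      | succ i =>
        induction j using Fin.cases with
        | zero =>
          have h4 : ω (X' i : E) f = 0 := by
            rw [hskew, hωfU _ (X' i).2]; ring
          simp only [Fin.cons_zero, Fin.cons_succ, hY0def, map_smul, smul_eq_mul, h4]
          simp [Fin.succ_ne_zero i]
        | succ j =>
          have h4 := hXY' i j
          rw [hω'apply] at h4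
          simp only [Fin.cons_succ, h4, Fin.succ_inj]
    · -- ω X X
      intro i j
      induction i using Fin.cases with
      | zero =>
        induction j using Fin.cases with
        | zero =>
          simp only [Fin.cons_zero, hX0def, map_smul, LinearMap.smul_apply, smul_eq_mul,
            halt e]
          ring
        | succ j =>
          simp only [Fin.cons_zero, Fin.cons_succ, hX0def, map_smul, LinearMap.smul_apply,
            smul_eq_mul, hωeU _ (X' j).2]
          ring
      | succ i =>
        induction j using Fin.cases with
        | zero =>
          have h4 : ω (X' i : E) e = 0 := by
            rw [hskew, hωeU _ (X' i).2]; ring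
          simp only [Fin.cons_zero, Fin.cons_succ, hX0def, map_smul, smul_eq_mul, h4]
          ring
        | succ j =>
          have h4 := hXX' i j
          rw [hω'apply] at h4
          simp only [Fin.cons_succ, h4]
    · -- ω Y Y
      intro i j
      induction i using Fin.cases with
      | zero =>
        induction j using Fin.cases with
        | zero =>
          simp only [Fin.cons_zero, hY0def, map_smul, LinearMap.smul_apply, smul_eq_mul,
            halt f]
          ring
        | succ j =>
          simp only [Fin.cons_zero, Fin.cons_succ, hY0def, map_smul, LinearMap.smul_apply,
            smul_eq_mul, hωfU _ (Y' j).2]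
          ring
      | succ i =>
        induction j using Fin.cases with
        | zero =>
          have h4 : ω (Y' i : E) f = 0 := by
            rw [hskew, hωfU _ (Y' i).2]; ring
          simp only [Fin.cons_zero, Fin.cons_succ, hY0def, map_smul, smul_eq_mul, h4]
          ring
        | succ j =>
          have h4 := hYY' i j
          rw [hω'apply] at h4
          simp only [Fin.cons_succ, h4]
    · -- inner ℝ X X
      intro i j
      induction i using Fin.cases with
      | zero =>
        induction j using Fin.cases with
        | zero =>
          simp only [Fin.cons_zero, hX0def, smul_smul, mul_inv_cancel₀ hrpos.ne', one_smul,
            hee]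
          simp
        | succ j =>
          simp only [Fin.cons_zero, Fin.cons_succ, hX0def, smul_smul,
            mul_inv_cancel₀ hrpos.ne', one_smul, real_inner_smul_right, hUe _ (X' j).2]
          simp [(Fin.succ_ne_zero j).symm]
      | succ i =>
        induction j using Fin.cases with
        | zero =>
          simp only [Fin.cons_zero, Fin.cons_succ, hX0def, smul_smul,
            mul_inv_cancel₀ hrpos.ne', one_smul, real_inner_smul_left, hUe' _ (X' i).2]
          simp [Fin.succ_ne_zero i]
        | succ j =>
          have h4 := hiXX' i j
          rw [Submodule.coe_inner] at h4
          push_cast at h4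
          simp only [Fin.cons_succ, h4, Fin.succ_inj]
    · -- inner ℝ Y Y
      intro i j
      have hY0s : r • Y0 = s⁻¹ • f := by
        rw [hY0def, smul_smul, mul_inv, ← mul_assoc, mul_comm r s⁻¹, mul_assoc,
          mul_inv_cancel₀ hrpos.ne', mul_one]
      induction i using Fin.cases with
      | zero =>
        induction j using Fin.cases with
        | zero =>
          simp only [Fin.cons_zero, hY0s, real_inner_smul_left, real_inner_smul_right, hμf,
            if_pos rfl, ↓reduceIte]
          field_simp
          linarith [hs]
        | succ j =>
          simp only [Fin.cons_zero, Fin.cons_succ, hY0s, real_inner_smul_left,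
            real_inner_smul_right, hUf _ (Y' j).2]
          simp [(Fin.succ_ne_zero j).symm]
      | succ i =>
        induction j using Fin.cases with
        | zero =>
          simp only [Fin.cons_zero, Fin.cons_succ, hY0s, real_inner_smul_left,
            real_inner_smul_right, hUf' _ (Y' i).2]
          simp [Fin.succ_ne_zero i]
        | succ j =>
          have h4 := hiYY' i j
          rw [Submodule.coe_inner] at h4
          push_cast at h4
          simp only [Fin.cons_succ, h4, Fin.succ_inj]
    · -- inner ℝ X Y
      intro i j
      induction i using Fin.cases with
      | zero =>
        induction j using Fin.cases with
        | zero =>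
          simp only [Fin.cons_zero, hX0def, hY0def, smul_smul, real_inner_smul_left,
            real_inner_smul_right, hef]
          ring
        | succ j =>
          simp only [Fin.cons_zero, Fin.cons_succ, hX0def, smul_smul, real_inner_smul_left,
            real_inner_smul_right, hUe _ (Y' j).2]
          ring
      | succ i =>
        induction j using Fin.cases with
        | zero =>
          simp only [Fin.cons_zero, Fin.cons_succ, hY0def, smul_smul, real_inner_smul_left,
            real_inner_smul_right, hUf' _ (X' i).2]
          ring
        | succ j =>
          have h4 := hiXY' i j
          rw [Submodule.coe_inner] at h4
          push_cast at h4
          simp only [Fin.cons_succ, h4]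
    · -- span
      rw [Fin.range_cons, Fin.range_cons]
      apply le_antisymm le_top
      have hWle : W ≤ Submodule.span ℝ ((insert X0 (Set.range fun i => (X' i : E))) ∪
          (insert Y0 (Set.range fun i => (Y' i : E)))) := by
        rw [hWdef, Submodule.span_le]
        rintro w ⟨i, rfl⟩
        fin_cases i
        · show e ∈ _
          have : e = r • X0 := by
            rw [hX0def, smul_smul, mul_inv_cancel₀ hrpos.ne', one_smul]
          rw [this]
          exact Submodule.smul_mem _ _ (Submodule.subset_span (by simp))
        · show f ∈ _
          have : f = (s * r) • Y0 := by
            rw [hY0def, smul_smul, mul_inv_cancel₀ (by positivity : s * r ≠ 0), one_smul]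
          rw [this]
          exact Submodule.smul_mem _ _ (Submodule.subset_span (by simp))
      have hUle : (U : Submodule ℝ E) ≤ Submodule.span ℝ
          ((insert X0 (Set.range fun i => (X' i : E))) ∪
          (insert Y0 (Set.range fun i => (Y' i : E)))) := by
        have h5 := congrArg (Submodule.map U.subtype) hspan'
        rw [Submodule.map_subtype_top] at h5
        refine le_trans (le_of_eq h5.symm) ?_
        rw [Submodule.map_span, Set.image_union, ← Set.range_comp, ← Set.range_comp]
        apply Submodule.span_mono
        intro x hx
        rcases hx with ⟨i, rfl⟩ | ⟨i, rfl⟩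
        · exact Or.inl (Set.mem_insert_of_mem _ ⟨i, rfl⟩)
        · exact Or.inr (Set.mem_insert_of_mem _ ⟨i, rfl⟩)
      have htop : W ⊔ U = ⊤ := Submodule.sup_orthogonal_of_hasOrthogonalProjection
      rw [← htop]
      exact sup_le hWle hUle

set_option maxHeartbeats 2000000

/-- For subspaces `V, W` of a Lie algebra, the linear span of brackets `⁅x,y⁆`, `x ∈ V`,
`y ∈ W`. -/
def bracketSpan {L : Type*} [LieRing L] [LieAlgebra ℝ L] (V W : Submodule ℝ L) :
    Submodule ℝ L :=
  Submodule.span ℝ (Set.image2 (fun x y => ⁅x, y⁆) (V : Set L) (W : Set L))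

/-- A step 2 stratified Lie algebra `𝔤 = V₁ ⊕ V₂` whose second layer `V₂` is
one-dimensional and equal to the center is a Heisenberg Lie algebra: there is a standard
basis `(X₁,…,Xₙ,Y₁,…,Yₙ,Z)` whose only non-trivial brackets are `⁅Xᵢ,Yᵢ⁆ = Z`, with
`(aᵢXᵢ, aᵢYᵢ)` orthonormal for the given inner ℝ product on `V₁`, for some `aᵢ > 0`. -/
theorem statement8 {L : Type*} [LieRing L] [LieAlgebra ℝ L] [Module.Finite ℝ L]
    (V₁ V₂ : Submodule ℝ L)
    (hsup : V₁ ⊔ V₂ = ⊤) (hinf : V₁ ⊓ V₂ = ⊥)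
    (hbr : bracketSpan V₁ V₁ = V₂)
    (hcentral : ∀ x : L, ∀ y ∈ V₂, ⁅x, y⁆ = 0)
    (hcenter : ∀ x : L, (∀ y : L, ⁅x, y⁆ = 0) → x ∈ V₂)
    (hdimV₂ : Module.finrank ℝ V₂ = 1)
    (ip : V₁ → V₁ → ℝ)
    (hip_symm : ∀ u v, ip u v = ip v u)
    (hip_add : ∀ u u' v, ip (u + u') v = ip u v + ip u' v)
    (hip_smul : ∀ (c : ℝ) u v, ip (c • u) v = c * ip u v)
    (hip_pos : ∀ u, u ≠ 0 → 0 < ip u u) :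
    ∃ n : ℕ, 1 ≤ n ∧ Module.finrank ℝ V₁ = 2 * n ∧
      ∃ Z ∈ V₂, ∃ Xv Yv : Fin n → V₁, ∃ a : Fin n → ℝ,
        (∀ i, 0 < a i) ∧
        (∃ b : Basis (Fin n ⊕ Fin n ⊕ Unit) ℝ L,
          (∀ i, b (Sum.inl i) = (Xv i : L)) ∧
          (∀ i, b (Sum.inr (Sum.inl i)) = (Yv i : L)) ∧
          b (Sum.inr (Sum.inr ())) = Z) ∧
        (∀ i j, ⁅(Xv i : L), (Yv j : L)⁆ = if i = j then Z else 0) ∧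
        (∀ i j, ⁅(Xv i : L), (Xv j : L)⁆ = 0) ∧
        (∀ i j, ⁅(Yv i : L), (Yv j : L)⁆ = 0) ∧
        (∀ i j, ip (a i • Xv i) (a j • Xv j) = if i = j then 1 else 0) ∧
        (∀ i j, ip (a i • Yv i) (a j • Yv j) = if i = j then 1 else 0) ∧
        (∀ i j, ip (a i • Xv i) (a j • Yv j) = 0) := by
  classical
  -- brackets of V₁ elements land in V₂
  have hmem : ∀ u v : V₁, ⁅(u : L), (v : L)⁆ ∈ V₂ := by
    intro u v
    rw [← hbr]
    exact Submodule.subset_span (Set.mem_image2_of_mem u.2 v.2)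
  -- a basis vector of V₂
  haveI : Nontrivial V₂ := Module.nontrivial_of_finrank_pos (R := ℝ) (by omega)
  obtain ⟨v0, hv0⟩ := exists_ne (0 : V₂)
  have hspanv0 : Submodule.span ℝ {v0} = (⊤ : Submodule ℝ V₂) :=
    (finrank_eq_one_iff_of_nonzero v0 hv0).mp hdimV₂
  set b₂ : Basis Unit ℝ V₂ := Basis.mk (v := fun _ : Unit => v0)
    (linearIndependent_unique_iff.mpr hv0)
    (by rw [Set.range_const]; exact le_of_eq hspanv0.symm) with hb₂def
  have hb₂ : ∀ i : Unit, b₂ i = v0 := fun i => by rw [hb₂def, Basis.mk_apply]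
  set φ : V₂ →ₗ[ℝ] ℝ := b₂.coord () with hφdef
  have hφ : ∀ w : V₂, φ w • v0 = w := by
    intro w
    have h1 := b₂.sum_repr w
    rw [hφdef]
    simp only [hb₂ ()] at h1
    simpa using h1
  have hadd2 : ∀ (x y : L) (hx : x ∈ V₂) (hy : y ∈ V₂),
      (⟨x + y, add_mem hx hy⟩ : V₂) = ⟨x, hx⟩ + ⟨y, hy⟩ := fun x y hx hy => rfl
  have hsmul2 : ∀ (c : ℝ) (x : L) (hx : x ∈ V₂),
      (⟨c • x, Submodule.smul_mem _ c hx⟩ : V₂) = c • ⟨x, hx⟩ := fun c x hx => rfl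
  set β : V₁ →ₗ[ℝ] V₁ →ₗ[ℝ] ℝ := LinearMap.mk₂ ℝ
    (fun u v => φ ⟨⁅(u : L), (v : L)⁆, hmem u v⟩)
    (fun u u' v => by
      beta_reduce
      have h1 : (⟨⁅((u + u' : V₁) : L), (v : L)⁆, hmem (u + u') v⟩ : V₂)
          = ⟨⁅(u : L), (v : L)⁆, hmem u v⟩ + ⟨⁅(u' : L), (v : L)⁆, hmem u' v⟩ := by
        apply Subtype.ext; simp [add_lie]
      rw [h1, map_add])
    (fun c u v => by
      beta_reduce
      have h1 : (⟨⁅((c • u : V₁) : L), (v : L)⁆, hmem (c • u) v⟩ : V₂)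
          = c • ⟨⁅(u : L), (v : L)⁆, hmem u v⟩ := by
        apply Subtype.ext; simp [smul_lie]
      rw [h1, map_smul, smul_eq_mul])
    (fun u v v' => by
      beta_reduce
      have h1 : (⟨⁅(u : L), ((v + v' : V₁) : L)⁆, hmem u (v + v')⟩ : V₂)
          = ⟨⁅(u : L), (v : L)⁆, hmem u v⟩ + ⟨⁅(u : L), (v' : L)⁆, hmem u v'⟩ := by
        apply Subtype.ext; simp [lie_add]
      rw [h1, map_add])
    (fun c u v => by
      beta_reduce
      have h1 : (⟨⁅(u : L), ((c • v : V₁) : L)⁆, hmem u (c • v)⟩ : V₂)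
          = c • ⟨⁅(u : L), (v : L)⁆, hmem u v⟩ := by
        apply Subtype.ext; simp [lie_smul]
      rw [h1, map_smul, smul_eq_mul]) with hβdef
  have hβapply : ∀ u v : V₁, β u v = φ ⟨⁅(u : L), (v : L)⁆, hmem u v⟩ := by
    intro u v
    rw [hβdef, LinearMap.mk₂_apply]
  have hβ : ∀ u v : V₁, ⁅(u : L), (v : L)⁆ = β u v • (v0 : L) := by
    intro u v
    have h1 := hφ ⟨⁅(u : L), (v : L)⁆, hmem u v⟩
    rw [hβapply]
    have h2 := congrArg (Submodule.subtype V₂) h1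
    simpa using h2.symm
  have hβalt : ∀ u : V₁, β u u = 0 := by
    intro u
    rw [hβapply]
    have : (⟨⁅(u : L), (u : L)⁆, hmem u u⟩ : V₂) = 0 := by
      apply Subtype.ext; simp
    rw [this, map_zero]
  have hβnd : ∀ u : V₁, u ≠ 0 → ∃ v : V₁, β u v ≠ 0 := by
    intro u hu
    by_contra h
    push_neg at h
    have hucen : ∀ y : L, ⁅(u : L), y⁆ = 0 := by
      intro y
      have hy : y ∈ V₁ ⊔ V₂ := by rw [hsup]; exact Submodule.mem_top
      obtain ⟨y₁, hy₁, y₂, hy₂, rfl⟩ := Submodule.mem_sup.mp hy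
      rw [lie_add, hcentral _ _ hy₂, add_zero]
      have := hβ u ⟨y₁, hy₁⟩
      rw [h ⟨y₁, hy₁⟩, zero_smul] at this
      exact this
    have : (u : L) ∈ V₁ ⊓ V₂ := ⟨u.2, hcenter _ hucen⟩
    rw [hinf] at this
    exact hu (Subtype.ext (by simpa using this))
  -- inner product space structure on V₁
  set c : InnerProductSpace.Core ℝ V₁ :=
    { inner := ip
      conj_inner_symm := fun x y => by simpa using hip_symm y x
      re_inner_nonneg := by
        intro x
        rcases eq_or_ne x 0 with h | h
        · subst h
          have h0 : ip (0 : V₁) (0 : V₁) = 0 := by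
            have := hip_smul 0 0 0
            simpa using this
          simpa [h0] using le_refl (0 : ℝ)
        · simpa using (hip_pos x h).le
      add_left := fun x y z => hip_add x y z
      smul_left := fun x y r => by simpa using hip_smul r x y
      definite := fun x hx => by
        by_contra h
        exact (hip_pos x h).ne' (by simpa using hx) } with hcdef
  letI nacg : NormedAddCommGroup V₁ := c.toNormedAddCommGroup
  letI ips : InnerProductSpace ℝ V₁ := InnerProductSpace.ofCore c.toCore
  have hinner : ∀ u v : V₁, (inner ℝ u v : ℝ) = ip u v := fun u v => rfl
  obtain ⟨n, hn2, X, Y, a, hapos, hXY, hXX, hYY, hiXX, hiYY, hiXY, hspan⟩ :=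
    symplectic_gram (Module.finrank ℝ V₁) rfl β hβalt hβnd
  have hn1 : 1 ≤ n := by
    by_contra h
    push_neg at h
    have h0 : Module.finrank ℝ V₁ = 0 := by omega
    have hV1bot : V₁ = ⊥ := Submodule.finrank_eq_zero.mp h0
    rw [hV1bot] at hbr
    have hb0 : bracketSpan (⊥ : Submodule ℝ L) ⊥ = ⊥ := by
      have h2 : (Set.image2 (fun x y => ⁅x, y⁆) ((⊥ : Submodule ℝ L) : Set L)
          ((⊥ : Submodule ℝ L) : Set L)) = {(0 : L)} := by
        rw [Submodule.bot_coe, Set.image2_singleton]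
        simp
      rw [bracketSpan, h2]
      exact Submodule.span_zero_singleton ℝ
    rw [hb0] at hbr
    rw [← hbr] at hdimV₂
    simp [finrank_bot] at hdimV₂
  -- orthonormality / linear independence
  have hg : Orthonormal ℝ (Sum.elim (fun i => a i • X i) (fun i => a i • Y i) :
      Fin n ⊕ Fin n → V₁) := by
    rw [orthonormal_iff_ite]
    intro s t
    cases s with
    | inl i =>
      cases t with
      | inl j => simpa using hiXX i j
      | inr j => simpa using hiXY i j
    | inr i =>
      cases t with
      | inl j =>
        simp only [Sum.elim_inl, Sum.elim_inr]
        rw [real_inner_comm]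
        simpa using hiXY j i
      | inr j => simpa using hiYY i j
  have hli := hg.linearIndependent
  have hXYli : LinearIndependent ℝ (Sum.elim X Y : Fin n ⊕ Fin n → V₁) := by
    have h2 := hli.units_smul (fun s => Units.mk0 ((Sum.elim a a s)⁻¹)
      (by cases s <;> simp [(hapos _).ne']))
    convert h2 using 1
    funext s
    cases s with
    | inl i =>
      show X i = _
      simp [smul_smul, inv_mul_cancel₀ (hapos i).ne']
    | inr i =>
      show Y i = _
      simp [smul_smul, inv_mul_cancel₀ (hapos i).ne']
    all_goals rfl
  have hb₁span : ⊤ ≤ Submodule.span ℝ (Set.range (Sum.elim X Y)) := by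
    rw [Set.Sum.elim_range]
    exact le_of_eq hspan.symm
  set b₁ : Basis (Fin n ⊕ Fin n) ℝ V₁ := Basis.mk hXYli hb₁span with hb₁def
  have hb₁ : ∀ s, b₁ s = Sum.elim X Y s := fun s => by rw [hb₁def, Basis.mk_apply]
  have hcompl : IsCompl V₁ V₂ := ⟨disjoint_iff.mpr hinf, codisjoint_iff.mpr hsup⟩
  set bL : Basis (Fin n ⊕ (Fin n ⊕ Unit)) ℝ L :=
    (((b₁.prod b₂).map (Submodule.prodEquivOfIsCompl V₁ V₂ hcompl)).reindex
      (Equiv.sumAssoc (Fin n) (Fin n) Unit)) with hbLdef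
  have hbLX : ∀ i, bL (Sum.inl i) = (X i : L) := by
    intro i
    rw [hbLdef, Basis.reindex_apply, Basis.map_apply]
    have h1 : (Equiv.sumAssoc (Fin n) (Fin n) Unit).symm (Sum.inl i)
        = Sum.inl (Sum.inl i) := rfl
    rw [h1]
    have h2 : (b₁.prod b₂) (Sum.inl (Sum.inl i)) = (b₁ (Sum.inl i), 0) :=
      Prod.ext (b₁.prod_apply_inl_fst b₂ _) (b₁.prod_apply_inl_snd b₂ _)
    rw [h2, Submodule.coe_prodEquivOfIsCompl']
    simp [hb₁]
  have hbLY : ∀ i, bL (Sum.inr (Sum.inl i)) = (Y i : L) := by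
    intro i
    rw [hbLdef, Basis.reindex_apply, Basis.map_apply]
    have h1 : (Equiv.sumAssoc (Fin n) (Fin n) Unit).symm (Sum.inr (Sum.inl i))
        = Sum.inl (Sum.inr i) := rfl
    rw [h1]
    have h2 : (b₁.prod b₂) (Sum.inl (Sum.inr i)) = (b₁ (Sum.inr i), 0) :=
      Prod.ext (b₁.prod_apply_inl_fst b₂ _) (b₁.prod_apply_inl_snd b₂ _)
    rw [h2, Submodule.coe_prodEquivOfIsCompl']
    simp [hb₁]
  have hbLZ : bL (Sum.inr (Sum.inr ())) = (v0 : L) := by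
    rw [hbLdef, Basis.reindex_apply, Basis.map_apply]
    have h1 : (Equiv.sumAssoc (Fin n) (Fin n) Unit).symm (Sum.inr (Sum.inr ()))
        = Sum.inr () := rfl
    rw [h1]
    have h2 : (b₁.prod b₂) (Sum.inr ()) = (0, b₂ ()) :=
      Prod.ext (b₁.prod_apply_inr_fst b₂ _) (b₁.prod_apply_inr_snd b₂ _)
    rw [h2, Submodule.coe_prodEquivOfIsCompl']
    simp [hb₂ ()]
  refine ⟨n, hn1, hn2, (v0 : L), v0.2, X, Y, a, hapos, ⟨bL, hbLX, hbLY, hbLZ⟩,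
    ?_, ?_, ?_, ?_, ?_, ?_⟩
  · intro i j
    rw [hβ (X i) (Y j), hXY i j]
    by_cases h : i = j <;> simp [h]
  · intro i j
    rw [hβ (X i) (X j), hXX i j, zero_smul]
  · intro i j
    rw [hβ (Y i) (Y j), hYY i j, zero_smul]
  · intro i j
    rw [← hinner]
    exact hiXX i j
  · intro i j
    rw [← hinner]
    exact hiYY i j
  · intro i j
    rw [← hinner]
    exact hiXY i j
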